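/- arXiv:1711.00091 — 4 statements merged into one kernel-verified Lean document; each statement's English description precedes it below -/
import Mathlib

section
/- Let $W=\{(W_i,\omega_i)\}_{i\in I}$ be a fusion frame in $\mathcal{H}$ with fusion frame operator $S_W$. Then the following are equivalent: (1) $W$ is a fusion Riesz basis; (2) $S_W^{-1}W_i \perp W_j$ for all $i\ne j$; (3) $\omega_i^2 \pi_{W_i} S_W^{-1} \pi_{W_j} = \delta_{ij}\pi_{W_j}$ for all $i,j\in I$. -/
open scoped InnerProductSpace
open ContinuousLinearMap (adjoint)
set_option maxHeartbeats 1000000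
set_option synthInstance.maxHeartbeats 400000
noncomputable section

variable {H : Type*} [NormedAddCommGroup H] [InnerProductSpace ℂ H] [CompleteSpace H]
variable {ι : Type*} [Countable ι]

/-- The orthogonal projection onto a closed subspace, as an endomorphism of `H`. -/
noncomputable def projL (W : Submodule ℂ H) [CompleteSpace W] : H →L[ℂ] H :=
  W.subtypeL.comp (Submodule.orthogonalProjection W)

/-- `{(W i, ω i)}` is a fusion frame with bounds `A ≤ B`. -/
def IsFusionFrame (W : ι → Submodule ℂ H) [∀ i, CompleteSpace (W i)]
    (ω : ι → ℝ) (A B : ℝ) : Prop :=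
  ∀ f : H, ∃ s : ℝ,
    HasSum (fun i => (ω i) ^ 2 * ‖(Submodule.orthogonalProjection (W i) f : H)‖ ^ 2) s ∧
    A * ‖f‖ ^ 2 ≤ s ∧ s ≤ B * ‖f‖ ^ 2

/-- `{(W i, ω i)}` is a Bessel fusion sequence with bound `B`. -/
def IsBesselFusion (W : ι → Submodule ℂ H) [∀ i, CompleteSpace (W i)]
    (ω : ι → ℝ) (B : ℝ) : Prop :=
  ∀ f : H, ∃ s : ℝ,
    HasSum (fun i => (ω i) ^ 2 * ‖(Submodule.orthogonalProjection (W i) f : H)‖ ^ 2) s ∧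
    s ≤ B * ‖f‖ ^ 2

/-- `{(W i, ω i)}` is a fusion Riesz basis with bounds `C ≤ D`. -/
def IsFusionRieszBasisWith (W : ι → Submodule ℂ H) (ω : ι → ℝ) (C D : ℝ) : Prop :=
  (⨆ i, W i).topologicalClosure = ⊤ ∧ 0 < C ∧ C ≤ D ∧
  ∀ (J : Finset ι) (g : ∀ i, W i),
    C * ∑ j ∈ J, ‖(g j : H)‖ ^ 2 ≤ ‖∑ j ∈ J, ω j • ((g j : H))‖ ^ 2 ∧
    ‖∑ j ∈ J, ω j • ((g j : H))‖ ^ 2 ≤ D * ∑ j ∈ J, ‖(g j : H)‖ ^ 2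

/-- `{(W i, ω i)}` is a fusion Riesz basis. -/
def IsFusionRieszBasis (W : ι → Submodule ℂ H) (ω : ι → ℝ) : Prop :=
  ∃ C D : ℝ, IsFusionRieszBasisWith W ω C D

/-- for a fusion frame `W` with fusion frame operator `S_W`, TFAE:
(1) `W` is a fusion Riesz basis; (2) `S_W⁻¹ Wᵢ ⟂ Wⱼ` for `i ≠ j`;
(3) `ωᵢ² π_{Wᵢ} S_W⁻¹ π_{Wⱼ} = δᵢⱼ π_{Wⱼ}`. -/
theorem stmt5 [DecidableEq ι] (W : ι → Submodule ℂ H) [∀ i, CompleteSpace (W i)]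
    (ω : ι → ℝ) (hω : ∀ i, 0 < ω i) (A B : ℝ) (hA : 0 < A) (hAB : A ≤ B)
    (hframe : IsFusionFrame W ω A B)
    (S S' : H →L[ℂ] H)
    (hS : ∀ f, HasSum (fun i => (ω i) ^ 2 • ((Submodule.orthogonalProjection (W i) f : H))) (S f))
    (hS' : S.comp S' = 1 ∧ S'.comp S = 1) :
    (IsFusionRieszBasis W ω ↔
      ∀ i j, i ≠ j → ∀ x ∈ W i, ∀ y ∈ W j, ⟪S' x, y⟫_ℂ = 0) ∧
    (IsFusionRieszBasis W ω ↔
      ∀ i j : ι, (ω i) ^ 2 • ((projL (W i)).comp (S'.comp (projL (W j)))) =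
        if i = j then projL (W j) else 0) := by
  classical
  set P : ι → H →L[ℂ] H := fun i => projL (W i) with hPdef
  have hPapp : ∀ i f, P i f = ((Submodule.orthogonalProjection (W i) f : H)) := fun i f => rfl
  have hPmem : ∀ i f, P i f ∈ W i := fun i f => (Submodule.orthogonalProjection (W i) f).2
  have hPself : ∀ i (x : H), x ∈ W i → P i x = x := fun i x hx =>
    Submodule.starProjection_eq_self_iff.2 hx
  have hPinner : ∀ i (u v : H), ⟪P i u, v⟫_ℂ = ⟪u, P i v⟫_ℂ := fun i u v =>
    Submodule.inner_starProjection_left_eq_right _ u v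
  have hPzero : ∀ i (v : H), (∀ u ∈ W i, ⟪u, v⟫_ℂ = 0) → P i v = 0 := by
    intro i v h
    have h0 : Submodule.orthogonalProjection (W i) v = 0 :=
      Submodule.orthogonalProjectionOnto_eq_zero_iff.2 ((Submodule.mem_orthogonal _ _).2 h)
    rw [hPapp, h0]; simp
  have hSS' : ∀ f, S (S' f) = f := by
    intro f
    have := congrArg (fun T : H →L[ℂ] H => T f) hS'.1
    simpa using this
  have hsum' : ∀ f, HasSum (fun i => (ω i) ^ 2 • P i (S' f)) f := by
    intro f
    have := hS (S' f)
    rw [hSS' f] at this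
    exact this
  -- (1) → (2)
  have h12 : IsFusionRieszBasis W ω →
      ∀ i j, i ≠ j → ∀ x ∈ W i, ∀ y ∈ W j, ⟪S' x, y⟫_ℂ = 0 := by
    rintro ⟨C, D, hcl, hC, hCD, hineq⟩ i j hij x hx y hy
    set u := S' x with hu
    set gv : ι → H := fun k => ω k • P k u - (if k = i then (ω i)⁻¹ • x else 0) with hgv
    have hmem : ∀ k, gv k ∈ W k := by
      intro k
      refine Submodule.sub_mem _ (Submodule.smul_of_tower_mem _ _ (hPmem k u)) ?_
      by_cases hk : k = i
      · subst hk; rw [if_pos rfl]; exact Submodule.smul_of_tower_mem _ _ hx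
      · rw [if_neg hk]; exact Submodule.zero_mem _
    set G : ∀ k, W k := fun k => ⟨gv k, hmem k⟩ with hG
    have hGcoe : ∀ k, ((G k : H)) = gv k := fun k => rfl
    have hgsum : HasSum (fun k => ω k • gv k) 0 := by
      have h1 : HasSum (fun k => (ω k) ^ 2 • P k u) x := hsum' x
      have h2 : HasSum (fun k => if k = i then x else 0) x := hasSum_ite_eq i x
      have heq : (fun k => ω k • gv k) =
          fun k => (ω k) ^ 2 • P k u - (if k = i then x else 0) := by
        funext k
        rw [hgv]
        simp only [smul_sub, smul_smul, ← sq]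
        congr 1
        by_cases hk : k = i
        · subst hk
          rw [if_pos rfl, if_pos rfl, smul_smul, mul_inv_cancel₀ (hω k).ne', one_smul]
        · rw [if_neg hk, if_neg hk, smul_zero]
      rw [heq]
      simpa using h1.sub h2
    have hg0 : ∀ k, gv k = 0 := by
      intro k
      have key : ∀ ε : ℝ, 0 < ε → C * ‖gv k‖ ^ 2 ≤ ε := by
        intro ε hε
        obtain ⟨J₀, hJ₀⟩ := Metric.tendsto_atTop.1 hgsum (Real.sqrt ε) (Real.sqrt_pos.2 hε)
        set J : Finset ι := insert k J₀ with hJ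
        have hle : J₀ ≤ J := Finset.subset_insert k J₀
        have hd := hJ₀ J hle
        rw [dist_zero_right] at hd
        have hn2 : ‖∑ b ∈ J, ω b • gv b‖ ^ 2 < ε := by
          have h0 : (0:ℝ) ≤ ‖∑ b ∈ J, ω b • gv b‖ := norm_nonneg _
          nlinarith [Real.sq_sqrt hε.le, Real.sqrt_nonneg ε]
        have hRiesz := (hineq J G).1
        simp only [hGcoe] at hRiesz
        have hsingle : ‖gv k‖ ^ 2 ≤ ∑ j ∈ J, ‖gv j‖ ^ 2 :=
          Finset.single_le_sum (f := fun j => ‖gv j‖ ^ 2) (fun j _ => by positivity)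
            (Finset.mem_insert_self k J₀)
        nlinarith [hRiesz, hsingle]
      have hle0 : C * ‖gv k‖ ^ 2 ≤ 0 := by
        by_contra hpos
        push_neg at hpos
        have := key (C * ‖gv k‖ ^ 2 / 2) (by linarith)
        linarith
      have : ‖gv k‖ ^ 2 ≤ 0 := by
        by_contra hq
        push_neg at hq
        nlinarith
      have : ‖gv k‖ = 0 := by nlinarith [norm_nonneg (gv k), sq_nonneg ‖gv k‖]
      exact norm_eq_zero.1 this
    -- conclude
    have hPj : P j u = 0 := by
      have hjne : j ≠ i := fun h => hij h.symm
      have h1 : ω j • P j u = 0 := by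
        have := hg0 j
        simp only [hgv, if_neg hjne, sub_zero] at this
        exact this
      rcases smul_eq_zero.1 h1 with h | h
      · exact absurd h (hω j).ne'
      · exact h
    calc ⟪S' x, y⟫_ℂ = ⟪u, P j y⟫_ℂ := by rw [hPself j y hy]
    _ = ⟪P j u, y⟫_ℂ := (hPinner j u y).symm
    _ = 0 := by rw [hPj, inner_zero_left]
  -- (2) → (3)
  have h23 : (∀ i j, i ≠ j → ∀ x ∈ W i, ∀ y ∈ W j, ⟪S' x, y⟫_ℂ = 0) →
      ∀ i j : ι, (ω i) ^ 2 • ((projL (W i)).comp (S'.comp (projL (W j)))) =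
        if i = j then projL (W j) else 0 := by
    intro h2 i j
    have hPoff : ∀ k l (y : H), k ≠ l → y ∈ W l → P k (S' y) = 0 := by
      intro k l y hkl hy
      refine hPzero k (S' y) (fun u hu => ?_)
      have := h2 l k (fun h => hkl h.symm) y hy u hu
      rw [← inner_conj_symm, this, map_zero]
    by_cases hij : i = j
    · subst hij
      rw [if_pos rfl]
      ext f
      simp only [ContinuousLinearMap.smul_apply, ContinuousLinearMap.comp_apply]
      set y := projL (W i) f with hy
      have hyW : y ∈ W i := hPmem i f
      have h1 : HasSum (fun k => (ω k) ^ 2 • P k (S' y)) y := hsum' y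
      have h2' : HasSum (fun k => (ω k) ^ 2 • P k (S' y)) ((ω i) ^ 2 • P i (S' y)) := by
        refine hasSum_single i (fun k hk => ?_)
        rw [hPoff k i y hk hyW, smul_zero]
      exact h2'.unique h1
    · rw [if_neg hij]
      ext f
      simp only [ContinuousLinearMap.smul_apply, ContinuousLinearMap.comp_apply,
        ContinuousLinearMap.zero_apply]
      rw [show (projL (W i)) (S' (projL (W j) f)) = P i (S' (P j f)) from rfl,
        hPoff i j (P j f) hij (hPmem j f), smul_zero]
  -- (3) → (2)
  have h32 : (∀ i j : ι, (ω i) ^ 2 • ((projL (W i)).comp (S'.comp (projL (W j)))) =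
        if i = j then projL (W j) else 0) →
      ∀ i j, i ≠ j → ∀ x ∈ W i, ∀ y ∈ W j, ⟪S' x, y⟫_ℂ = 0 := by
    intro h3 i j hij x hx y hy
    have hji : ¬ (j = i) := fun h => hij h.symm
    have := congrArg (fun T : H →L[ℂ] H => T x) (h3 j i)
    simp only [ContinuousLinearMap.smul_apply, ContinuousLinearMap.comp_apply,
      apply_ite (fun T : H →L[ℂ] H => T x), if_neg hji,
      ContinuousLinearMap.zero_apply] at this
    have hx' : (projL (W i)) x = x := hPself i x hx
    rw [hx'] at this
    have hPjx : P j (S' x) = 0 := by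
      have h1 : ((ω j) ^ 2 : ℝ) • P j (S' x) = 0 := this
      rcases smul_eq_zero.1 h1 with h | h
      · exact absurd h (pow_pos (hω j) 2).ne'
      · exact h
    calc ⟪S' x, y⟫_ℂ = ⟪S' x, P j y⟫_ℂ := by rw [hPself j y hy]
    _ = ⟪P j (S' x), y⟫_ℂ := by rw [hPinner j (S' x) y]
    _ = 0 := by rw [hPjx, inner_zero_left]
  -- (3) → (1)
  have h31 : (∀ i j : ι, (ω i) ^ 2 • ((projL (W i)).comp (S'.comp (projL (W j)))) =
        if i = j then projL (W j) else 0) → IsFusionRieszBasis W ω := by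
    intro h3
    have h3' : ∀ i j (f : H), (ω i) ^ 2 • P i (S' (P j f)) = if i = j then P j f else 0 := by
      intro i j f
      have := congrArg (fun T : H →L[ℂ] H => T f) (h3 i j)
      simpa only [ContinuousLinearMap.smul_apply, ContinuousLinearMap.comp_apply,
        apply_ite (fun T : H →L[ℂ] H => T f), ContinuousLinearMap.zero_apply] using this
    -- completeness
    have hcl : (⨆ i, W i).topologicalClosure = ⊤ := by
      rw [Submodule.topologicalClosure_eq_top_iff]
      rw [Submodule.eq_bot_iff]
      intro f hf
      have hPf : ∀ i, P i f = 0 := by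
        intro i
        refine hPzero i f (fun u hu => ?_)
        exact hf u (Submodule.mem_iSup_of_mem i hu)
      obtain ⟨s, hsum, hlb, _⟩ := hframe f
      have hzero : HasSum (fun i => (ω i) ^ 2 * ‖(Submodule.orthogonalProjection (W i) f : H)‖ ^ 2) 0 := by
        have : (fun i => (ω i) ^ 2 * ‖(Submodule.orthogonalProjection (W i) f : H)‖ ^ 2) =
            fun _ => (0:ℝ) := by
          funext i
          rw [← hPapp, hPf i]
          simp
        rw [this]
        exact hasSum_zero
      have hs0 : s = 0 := hsum.unique hzero
      rw [hs0] at hlb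
      have : ‖f‖ ^ 2 ≤ 0 := by nlinarith
      have : ‖f‖ = 0 := by nlinarith [norm_nonneg f, sq_nonneg ‖f‖]
      exact norm_eq_zero.1 this
    rcases subsingleton_or_nontrivial H with hsing | hnt
    · refine ⟨1, 1, hcl, one_pos, le_refl 1, ?_⟩
      intro J g
      have hz : ∀ x : H, ‖x‖ = 0 := fun x => by
        rw [Subsingleton.elim x 0, norm_zero]
      constructor <;> simp [hz]
    · -- norms
      have hS'pos : 0 < ‖S'‖ := by
        rw [norm_pos_iff]
        intro h0
        have : S.comp S' = 0 := by rw [h0, ContinuousLinearMap.comp_zero]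
        rw [hS'.1] at this
        exact one_ne_zero this
      have hSpos : 0 < ‖S‖ := by
        rw [norm_pos_iff]
        intro h0
        have : S.comp S' = 0 := by rw [h0, ContinuousLinearMap.zero_comp]
        rw [hS'.1] at this
        exact one_ne_zero this
      have hns : 1 ≤ ‖S‖ * ‖S'‖ := by
        have h1 : ‖(1 : H →L[ℂ] H)‖ = 1 := ContinuousLinearMap.norm_id
        calc (1:ℝ) = ‖(1 : H →L[ℂ] H)‖ := h1.symm
        _ = ‖S.comp S'‖ := by rw [hS'.1]
        _ ≤ ‖S‖ * ‖S'‖ := ContinuousLinearMap.opNorm_comp_le _ _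
      have hBpos : 0 < B := lt_of_lt_of_le hA hAB
      have hBS : (0:ℝ) < B * ‖S'‖ ^ 2 := mul_pos hBpos (pow_pos hS'pos 2)
      refine ⟨(B * ‖S'‖ ^ 2)⁻¹, ‖S‖ ^ 2 / A, hcl, inv_pos.2 hBS, ?_, ?_⟩
      · -- C ≤ D
        have h1 : (1:ℝ) ≤ (‖S‖ * ‖S'‖) ^ 2 := by nlinarith [hns]
        have key : (1:ℝ) ≤ (B * ‖S'‖ ^ 2) * (‖S‖ ^ 2 / A) := by
          have heq : (B * ‖S'‖ ^ 2) * (‖S‖ ^ 2 / A) = B / A * (‖S‖ * ‖S'‖) ^ 2 := by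
            field_simp
          rw [heq]
          have hBA : (1:ℝ) ≤ B / A := (one_le_div hA).2 hAB
          nlinarith
        calc (B * ‖S'‖ ^ 2)⁻¹ = (B * ‖S'‖ ^ 2)⁻¹ * 1 := (mul_one _).symm
        _ ≤ (B * ‖S'‖ ^ 2)⁻¹ * ((B * ‖S'‖ ^ 2) * (‖S‖ ^ 2 / A)) :=
              mul_le_mul_of_nonneg_left key (inv_nonneg.2 hBS.le)
        _ = ‖S‖ ^ 2 / A := by
              rw [← mul_assoc, inv_mul_cancel₀ hBS.ne', one_mul]
      · intro J g
        set f := ∑ j ∈ J, ω j • ((g j : H)) with hf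
        set h := S' f with hh
        have hPS' : ∀ i, (ω i) ^ 2 • P i h =
            if i ∈ J then ω i • ((g i : H)) else 0 := by
          intro i
          have hSf : S' f = ∑ j ∈ J, ω j • S' ((g j : H)) := by
            rw [hf, map_sum]
            congr 1
            funext j
            rw [ContinuousLinearMap.map_smul_of_tower]
          have : (ω i) ^ 2 • P i h = ∑ j ∈ J, ω j • ((ω i) ^ 2 • P i (S' ((g j : H)))) := by
            rw [hh, hSf, map_sum, Finset.smul_sum]
            congr 1
            funext j
            rw [ContinuousLinearMap.map_smul_of_tower, smul_comm]
          rw [this]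
          have hterm : ∀ j ∈ J, ω j • ((ω i) ^ 2 • P i (S' ((g j : H)))) =
              if i = j then ω j • ((g j : H)) else 0 := by
            intro j _
            have hgW : ((g j : H)) ∈ W j := (g j).2
            have := h3' i j ((g j : H))
            rw [hPself j _ hgW] at this
            rw [this]
            by_cases hij : i = j
            · rw [if_pos hij, if_pos hij]
            · rw [if_neg hij, if_neg hij, smul_zero]
          rw [Finset.sum_congr rfl hterm]
          rw [Finset.sum_ite_eq]
        have hterm2 : ∀ i, (ω i) ^ 2 * ‖(Submodule.orthogonalProjection (W i) h : H)‖ ^ 2 =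
            if i ∈ J then ‖(g i : H)‖ ^ 2 else 0 := by
          intro i
          have := congrArg (fun v : H => ‖v‖ ^ 2) (hPS' i)
          simp only [norm_smul, Real.norm_eq_abs, mul_pow, sq_abs] at this
          rw [← hPapp]
          have hω2 : (0:ℝ) < (ω i) ^ 2 := pow_pos (hω i) 2
          by_cases hiJ : i ∈ J
          · rw [if_pos hiJ] at this ⊢
            have h2 : ((ω i) ^ 2) ^ 2 * ‖P i h‖ ^ 2 = (ω i) ^ 2 * ‖(g i : H)‖ ^ 2 := by
              calc ((ω i) ^ 2) ^ 2 * ‖P i h‖ ^ 2 = ‖(ω i) ^ 2 • P i h‖ ^ 2 := by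
                    rw [norm_smul, Real.norm_eq_abs, mul_pow, sq_abs]
              _ = ‖ω i • ((g i : H))‖ ^ 2 := by rw [hPS' i, if_pos hiJ]
              _ = (ω i) ^ 2 * ‖(g i : H)‖ ^ 2 := by
                    rw [norm_smul, Real.norm_eq_abs, mul_pow, sq_abs]
            have : (ω i) ^ 2 * ((ω i) ^ 2 * ‖P i h‖ ^ 2) = (ω i) ^ 2 * ‖(g i : H)‖ ^ 2 := by
              nlinarith [h2]
            exact mul_left_cancel₀ hω2.ne' this
          · rw [if_neg hiJ]
            have h2 : (ω i) ^ 2 • P i h = 0 := by rw [hPS' i, if_neg hiJ]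
            have h3'' : P i h = 0 := by
              rcases smul_eq_zero.1 h2 with hc | hc
              · exact absurd hc hω2.ne'
              · exact hc
            rw [h3'']
            simp
        obtain ⟨s, hsum, hlb, hub⟩ := hframe h
        have hsval : HasSum (fun i => (ω i) ^ 2 * ‖(Submodule.orthogonalProjection (W i) h : H)‖ ^ 2)
            (∑ i ∈ J, (ω i) ^ 2 * ‖(Submodule.orthogonalProjection (W i) h : H)‖ ^ 2) := by
          refine hasSum_sum_of_ne_finset_zero (fun i hi => ?_)
          rw [hterm2 i, if_neg hi]
        have hs : s = ∑ i ∈ J, ‖(g i : H)‖ ^ 2 := by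
          rw [hsum.unique hsval]
          refine Finset.sum_congr rfl (fun i hi => ?_)
          rw [hterm2 i, if_pos hi]
        rw [hs] at hlb hub
        -- norms relation
        have hfh : ‖f‖ ≤ ‖S‖ * ‖h‖ := by
          calc ‖f‖ = ‖S h‖ := by rw [hh, hSS' f]
          _ ≤ ‖S‖ * ‖h‖ := S.le_opNorm h
        have hhf : ‖h‖ ≤ ‖S'‖ * ‖f‖ := S'.le_opNorm f
        constructor
        · -- lower
          have h1 : (∑ j ∈ J, ‖(g j : H)‖ ^ 2) ≤ B * ‖S'‖ ^ 2 * ‖f‖ ^ 2 := by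
            have hsq : ‖h‖ ^ 2 ≤ (‖S'‖ * ‖f‖) ^ 2 := by
              nlinarith [norm_nonneg h, norm_nonneg f, norm_nonneg (S' : H →L[ℂ] H)]
            nlinarith
          calc (B * ‖S'‖ ^ 2)⁻¹ * ∑ j ∈ J, ‖(g j : H)‖ ^ 2
              ≤ (B * ‖S'‖ ^ 2)⁻¹ * (B * ‖S'‖ ^ 2 * ‖f‖ ^ 2) := by
                refine mul_le_mul_of_nonneg_left ?_ (inv_nonneg.2 hBS.le)
                nlinarith
          _ = ‖f‖ ^ 2 := by
                rw [← mul_assoc, inv_mul_cancel₀ hBS.ne', one_mul]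
        · -- upper
          have hf2 : ‖f‖ ^ 2 ≤ ‖S‖ ^ 2 * ‖h‖ ^ 2 := by
            nlinarith [norm_nonneg f, norm_nonneg h, norm_nonneg (S : H →L[ℂ] H)]
          have h2 : ‖S‖ ^ 2 * ‖h‖ ^ 2 ≤ (‖S‖ ^ 2 / A) * ∑ j ∈ J, ‖(g j : H)‖ ^ 2 := by
            calc ‖S‖ ^ 2 * ‖h‖ ^ 2 = (‖S‖ ^ 2 / A) * (A * ‖h‖ ^ 2) := by
                  field_simp [hA.ne']
            _ ≤ (‖S‖ ^ 2 / A) * ∑ j ∈ J, ‖(g j : H)‖ ^ 2 :=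
                  mul_le_mul_of_nonneg_left hlb (by positivity)
          linarith
  exact ⟨⟨h12, fun h2 => h31 (h23 h2)⟩, ⟨fun h1 => h23 (h12 h1), h31⟩⟩
end
end

section
/- Let $W=\{(W_i,\omega_i)\}_{i\in I}$ be a fusion Riesz basis in $\mathcal{H}$. Then the following are equivalent: (1) $W$ is a fusion orthonormal basis; (2) the fusion Gram matrix $\mathcal{G}_W = \phi_{WW}T_W^*T_W$ equals the identity on $(\sum_{i\in I}\oplus W_i)_{\ell^2}$; (3) the fusion Gram matrix of the 1-uniform family $W' = \{(W_i,1)\}$ equals the identity on $(\sum_{i\in I}\oplus W_i)_{\ell^2}$. -/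
open scoped InnerProductSpace
open ContinuousLinearMap (adjoint)
set_option maxHeartbeats 1000000
set_option synthInstance.maxHeartbeats 400000
noncomputable section

variable {H : Type*} [NormedAddCommGroup H] [InnerProductSpace ℂ H] [CompleteSpace H]
variable {ι : Type*} [Countable ι]

section AuxStmt12
variable {W : ι → Submodule ℂ H} [∀ i, CompleteSpace (W i)] {ω : ι → ℝ} {C : ℝ}

lemma aux_uniq (hC0 : 0 < C)
    (hC : ∀ (J : Finset ι) (g : ∀ i, W i),
      C * ∑ j ∈ J, ‖(g j : H)‖ ^ 2 ≤ ‖∑ j ∈ J, ω j • ((g j : H))‖ ^ 2)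
    (g : ∀ i, W i) (hsq : Summable fun j => ‖(g j : H)‖ ^ 2)
    (hsum : HasSum (fun j => ω j • ((g j : H))) 0) (j : ι) : (g j : H) = 0 := by
  classical
  have h1 : Filter.Tendsto (fun J : Finset ι => C * ∑ j ∈ J, ‖(g j : H)‖ ^ 2)
      Filter.atTop (nhds (C * ∑' j, ‖(g j : H)‖ ^ 2)) := by
    simpa [Finset.mul_sum] using (show Filter.Tendsto (fun J : Finset ι => ∑ i ∈ J, C * ‖(g i : H)‖ ^ 2)
      Filter.atTop (nhds (C * ∑' j, ‖(g j : H)‖ ^ 2)) from hsq.hasSum.mul_left C)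
  have h2' : Filter.Tendsto (fun J : Finset ι => ∑ j ∈ J, ω j • ((g j : H)))
      Filter.atTop (nhds 0) := hsum
  have h2 : Filter.Tendsto (fun J : Finset ι => ‖∑ j ∈ J, ω j • ((g j : H))‖ ^ 2)
      Filter.atTop (nhds 0) := by
    simpa using (h2'.norm.pow 2)
  have hT : C * ∑' j, ‖(g j : H)‖ ^ 2 ≤ 0 :=
    le_of_tendsto_of_tendsto' h1 h2 (fun J => hC J g)
  have ht0 : ∑' j, ‖(g j : H)‖ ^ 2 ≤ 0 := by
    nlinarith
  have hle := hsq.le_tsum j (fun k _ => by positivity)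
  have hsq0 : ‖(g j : H)‖ ^ 2 = 0 := le_antisymm (le_trans hle ht0) (by positivity)
  have : ‖(g j : H)‖ = 0 := by
    have := pow_eq_zero_iff (n := 2) (by norm_num) |>.mp hsq0
    exact this
  exact norm_eq_zero.mp this

lemma aux_sq (hC0 : 0 < C)
    (hC : ∀ (J : Finset ι) (g : ∀ i, W i),
      C * ∑ j ∈ J, ‖(g j : H)‖ ^ 2 ≤ ‖∑ j ∈ J, ω j • ((g j : H))‖ ^ 2)
    {f x : H}
    (hx : HasSum (fun j => (ω j) ^ 2 • ((Submodule.orthogonalProjection (W j) f : H))) x) :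
    Summable fun j => ‖ω j • ((Submodule.orthogonalProjection (W j) f : H))‖ ^ 2 := by
  classical
  have hx' : Filter.Tendsto
      (fun J : Finset ι => ∑ j ∈ J, (ω j) ^ 2 • ((Submodule.orthogonalProjection (W j) f : H)))
      Filter.atTop (nhds x) := hx
  obtain ⟨J0, hJ0⟩ := Filter.eventually_atTop.mp (hx' (Metric.ball_mem_nhds x one_pos))
  apply summable_of_sum_le (c := C⁻¹ * (‖x‖ + 1) ^ 2) (fun j => by positivity)
  intro J
  have hsub : ∑ j ∈ J, ‖ω j • ((Submodule.orthogonalProjection (W j) f : H))‖ ^ 2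
      ≤ ∑ j ∈ J ∪ J0, ‖ω j • ((Submodule.orthogonalProjection (W j) f : H))‖ ^ 2 :=
    Finset.sum_le_sum_of_subset_of_nonneg Finset.subset_union_left
      (fun k _ _ => by positivity)
  have hball := hJ0 (J ∪ J0) Finset.subset_union_right
  have hb : ‖∑ j ∈ J ∪ J0, (ω j) ^ 2 • ((Submodule.orthogonalProjection (W j) f : H))‖ ≤ ‖x‖ + 1 := by
    have hd : ‖(∑ j ∈ J ∪ J0, (ω j) ^ 2 • ((Submodule.orthogonalProjection (W j) f : H))) - x‖ < 1 := by
      simpa [Metric.mem_ball, dist_eq_norm] using hball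
    have := norm_sub_norm_le
      (∑ j ∈ J ∪ J0, (ω j) ^ 2 • ((Submodule.orthogonalProjection (W j) f : H))) x
    linarith
  have hCineq := hC (J ∪ J0) (fun j => ω j • Submodule.orthogonalProjection (W j) f)
  have hco : ∀ j : ι, ((ω j • Submodule.orthogonalProjection (W j) f : W j) : H)
      = ω j • ((Submodule.orthogonalProjection (W j) f : H)) := fun j => rfl
  rw [show (∑ j ∈ J ∪ J0, ω j • ((ω j • Submodule.orthogonalProjection (W j) f : W j) : H))
      = ∑ j ∈ J ∪ J0, (ω j) ^ 2 • ((Submodule.orthogonalProjection (W j) f : H)) from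
    Finset.sum_congr rfl (fun j _ => by rw [hco, smul_smul, sq])] at hCineq
  simp only [hco] at hCineq
  have hnorm : ‖∑ j ∈ J ∪ J0, (ω j) ^ 2 • ((Submodule.orthogonalProjection (W j) f : H))‖ ^ 2
      ≤ (‖x‖ + 1) ^ 2 := by
    have h0 : (0:ℝ) ≤ ‖∑ j ∈ J ∪ J0, (ω j) ^ 2 • ((Submodule.orthogonalProjection (W j) f : H))‖ :=
      norm_nonneg _
    nlinarith
  have h2 : ∑ j ∈ J ∪ J0, ‖ω j • ((Submodule.orthogonalProjection (W j) f : H))‖ ^ 2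
      ≤ C⁻¹ * (‖x‖ + 1) ^ 2 := by
    rw [le_inv_mul_iff₀ hC0]
    exact le_trans hCineq hnorm
  linarith

lemma aux_biorth [DecidableEq ι] (hω : ∀ i, 0 < ω i) (hC0 : 0 < C)
    (hC : ∀ (J : Finset ι) (g : ∀ i, W i),
      C * ∑ j ∈ J, ‖(g j : H)‖ ^ 2 ≤ ‖∑ j ∈ J, ω j • ((g j : H))‖ ^ 2)
    (S Sinv : H →L[ℂ] H)
    (hS : ∀ f, HasSum (fun i => (ω i) ^ 2 • ((Submodule.orthogonalProjection (W i) f : H))) (S f))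
    (hSinv : S.comp Sinv = 1)
    {i : ι} {x : H} (hx : x ∈ W i) (j : ι) :
    (Submodule.orthogonalProjection (W j) (Sinv x) : H)
      = if j = i then (((ω i) ^ 2)⁻¹ : ℝ) • x else 0 := by
  have hSg : S (Sinv x) = x := by
    have := ContinuousLinearMap.ext_iff.mp hSinv x
    simpa [ContinuousLinearMap.comp_apply] using this
  have hA : HasSum (fun j => (ω j) ^ 2 • ((Submodule.orthogonalProjection (W j) (Sinv x) : H))) x := by
    have hA0 := hS (Sinv x)
    rwa [hSg] at hA0
  have hmem : ∀ k, ω k • ((Submodule.orthogonalProjection (W k) (Sinv x) : H))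
      - (if k = i then ((ω i)⁻¹ : ℝ) • x else 0) ∈ W k := by
    intro k
    by_cases h : k = i
    · subst h
      rw [if_pos rfl]
      exact Submodule.sub_mem _ (Submodule.smul_of_tower_mem _ _ (Submodule.coe_mem _))
        (Submodule.smul_of_tower_mem _ _ hx)
    · rw [if_neg h, sub_zero]
      exact Submodule.smul_of_tower_mem _ _ (Submodule.coe_mem _)
  have hz : ∀ k, ω k • ((Submodule.orthogonalProjection (W k) (Sinv x) : H))
      - (if k = i then ((ω i)⁻¹ : ℝ) • x else 0) = 0 := by
    intro k
    refine aux_uniq hC0 hC (fun k => ⟨_, hmem k⟩) ?_ ?_ k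
    · -- summability
      have hs1 : Summable fun k => 2 * ‖ω k • ((Submodule.orthogonalProjection (W k) (Sinv x) : H))‖ ^ 2 :=
        (aux_sq hC0 hC hA).mul_left 2
      have hs2 : Summable fun k : ι =>
          2 * ‖(if k = i then ((ω i)⁻¹ : ℝ) • x else (0:H))‖ ^ 2 := by
        apply Summable.mul_left
        have he : (fun k : ι => ‖(if k = i then ((ω i)⁻¹ : ℝ) • x else (0:H))‖ ^ 2)
            = fun k : ι => if k = i then ‖((ω i)⁻¹ : ℝ) • x‖ ^ 2 else 0 := by
          funext k; by_cases h : k = i <;> simp [h]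
        rw [he]
        exact (hasSum_ite_eq i _).summable
      apply Summable.of_nonneg_of_le (fun k => by positivity) _ (hs1.add hs2)
      intro k
      have h1 := norm_sub_le (ω k • ((Submodule.orthogonalProjection (W k) (Sinv x) : H)))
        (if k = i then ((ω i)⁻¹ : ℝ) • x else 0)
      have h2 := norm_nonneg (ω k • ((Submodule.orthogonalProjection (W k) (Sinv x) : H)))
      have h3 := norm_nonneg (if k = i then ((ω i)⁻¹ : ℝ) • x else (0:H))
      show ‖ω k • ((Submodule.orthogonalProjection (W k) (Sinv x) : H))
        - (if k = i then ((ω i)⁻¹ : ℝ) • x else 0)‖ ^ 2 ≤ _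
      nlinarith [sq_nonneg (‖ω k • ((Submodule.orthogonalProjection (W k) (Sinv x) : H))‖
        - ‖(if k = i then ((ω i)⁻¹ : ℝ) • x else (0:H))‖),
        mul_self_le_mul_self (norm_nonneg (ω k • ((Submodule.orthogonalProjection (W k) (Sinv x) : H))
          - (if k = i then ((ω i)⁻¹ : ℝ) • x else 0))) h1]
    · -- HasSum zero
      have hB : HasSum (fun k : ι => if k = i then x else (0:H)) x := hasSum_ite_eq i x
      have hAB := hA.sub hB
      rw [sub_self] at hAB
      convert hAB using 2 with k
      show ω k • (ω k • ((Submodule.orthogonalProjection (W k) (Sinv x) : H))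
          - (if k = i then ((ω i)⁻¹ : ℝ) • x else 0)) = _
      rw [smul_sub, smul_smul, ← sq]
      congr 1
      by_cases h : k = i
      · subst h
        rw [if_pos rfl, if_pos rfl, smul_smul, mul_inv_cancel₀ (ne_of_gt (hω k)), one_smul]
      · rw [if_neg h, if_neg h, smul_zero]
  by_cases h : j = i
  · subst h
    have := hz j
    rw [if_pos rfl] at this ⊢
    have h2 : ω j • ((Submodule.orthogonalProjection (W j) (Sinv x) : H)) = ((ω j)⁻¹ : ℝ) • x :=
      sub_eq_zero.mp this
    have h3 := congrArg (fun v => ((ω j)⁻¹ : ℝ) • v) h2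
    simpa [smul_smul, inv_smul_smul₀ (ne_of_gt (hω j)), sq, mul_inv] using h3
  · have := hz j
    rw [if_neg h, sub_zero] at this
    rw [if_neg h]
    rcases smul_eq_zero.mp this with h' | h'
    · exact absurd h' (ne_of_gt (hω j))
    · exact h'

lemma aux_T_single [DecidableEq ι]
    (T : lp (fun i => ↥(W i)) 2 →L[ℂ] H)
    (hT : ∀ f, HasSum (fun i => ω i • ((f i : H))) (T f))
    (i : ι) (a : W i) : T (lp.single 2 i a) = ω i • (a : H) := by
  refine (hT _).unique ?_
  have he : (fun j => ω j • (((lp.single 2 i a : lp (fun i => ↥(W i)) 2) j : H)))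
      = fun j => if j = i then ω i • (a : H) else 0 := by
    funext j
    by_cases h : j = i
    · subst h
      rw [lp.single_apply_self, if_pos rfl]
    · rw [lp.single_apply_ne _ _ _ h, if_neg h]
      simp
  rw [he]
  exact hasSum_ite_eq i _

lemma aux_adj [DecidableEq ι]
    (T : lp (fun i => ↥(W i)) 2 →L[ℂ] H)
    (hT : ∀ f, HasSum (fun i => ω i • ((f i : H))) (T f))
    (g : H) (i : ι) :
    (((adjoint T) g) i : H) = ω i • ((Submodule.orthogonalProjection (W i) g : H)) := by
  have key : ((adjoint T) g) i = ω i • (Submodule.orthogonalProjection (W i) g) := by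
    refine ext_inner_right ℂ ?_
    intro a
    have h1 : ⟪((adjoint T) g) i, a⟫_ℂ = ⟪(adjoint T) g, lp.single 2 i a⟫_ℂ :=
      (lp.inner_single_right (𝕜 := ℂ) i a ((adjoint T) g)).symm
    rw [h1, ContinuousLinearMap.adjoint_inner_left, aux_T_single T hT i a]
    have h2 : (ω i : ℝ) • (a : H) = ((ω i : ℂ)) • (a : H) := (Complex.coe_smul _ _).symm
    rw [h2, inner_smul_right]
    rw [show (ω i : ℝ) • (Submodule.orthogonalProjection (W i) g) = ((ω i : ℂ)) • (Submodule.orthogonalProjection (W i) g)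
        from (Complex.coe_smul _ _).symm,
      inner_smul_left, Complex.conj_ofReal,
      Submodule.inner_orthogonalProjectionOnto_eq_of_mem_right (K := W i) a g]
  rw [key]
  rfl

lemma smul_clm (A : H →L[ℂ] H) (c : ℝ) (v : H) : A (c • v) = c • A v := by
  rw [show c • v = ((c : ℂ)) • v from (Complex.coe_smul _ _).symm, map_smul]
  exact Complex.coe_smul _ _

lemma smul_proj (Wi : Submodule ℂ H) [CompleteSpace Wi] (c : ℝ) (v : H) :
    (Submodule.orthogonalProjection Wi (c • v) : H) = c • (Submodule.orthogonalProjection Wi v : H) := by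
  rw [show c • v = ((c : ℂ)) • v from (Complex.coe_smul _ _).symm, map_smul]
  push_cast
  exact Complex.coe_smul _ _

lemma aux_main (hω : ∀ i, 0 < ω i) (hC0 : 0 < C)
    (hC : ∀ (J : Finset ι) (g : ∀ i, W i),
      C * ∑ j ∈ J, ‖(g j : H)‖ ^ 2 ≤ ‖∑ j ∈ J, ω j • ((g j : H))‖ ^ 2)
    (T : lp (fun i => ↥(W i)) 2 →L[ℂ] H)
    (hT : ∀ f, HasSum (fun i => ω i • ((f i : H))) (T f))
    (S Sinv : H →L[ℂ] H)
    (hS : ∀ f, HasSum (fun i => (ω i) ^ 2 • ((Submodule.orthogonalProjection (W i) f : H))) (S f))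
    (hSinv : S.comp Sinv = 1)
    (φ : lp (fun i => ↥(W i)) 2 →L[ℂ] lp (fun i => ↥(W i)) 2)
    (hφ : ∀ f i, ((φ f) i : H) = (Submodule.orthogonalProjection (W i) (Sinv ((f i : H))) : H)) :
    (∀ i j, i ≠ j → ∀ x ∈ W i, ∀ y ∈ W j, ⟪x, y⟫_ℂ = 0) ↔
      φ ∘L (adjoint T) ∘L T = 1 := by
  classical
  constructor
  · intro horth
    have hproj : ∀ (f : lp (fun i => ↥(W i)) 2) (i : ι),
        (Submodule.orthogonalProjection (W i) (T f) : H) = ω i • ((f i : H)) := by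
      intro f i
      have hmap := ((W i).subtypeL.comp (Submodule.orthogonalProjection (W i))).hasSum (hT f)
      have he : (fun j => ((W i).subtypeL.comp (Submodule.orthogonalProjection (W i))) (ω j • ((f j : H))))
          = fun j => if j = i then ω i • ((f i : H)) else 0 := by
        funext j
        by_cases h : j = i
        · subst h
          simp only [ContinuousLinearMap.comp_apply, Submodule.subtypeL_apply, if_pos rfl]
          exact Submodule.starProjection_eq_self_iff.mpr
            (Submodule.smul_of_tower_mem _ _ (Submodule.coe_mem _))
        · simp only [ContinuousLinearMap.comp_apply, Submodule.subtypeL_apply, if_neg h]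
          have hzero : Submodule.orthogonalProjection (W i) ((f j : H)) = 0 :=
            Submodule.orthogonalProjectionOnto_eq_zero_iff.mpr (by
              rw [Submodule.mem_orthogonal]
              intro u hu
              exact horth i j (fun hij => h hij.symm) u hu (f j) (Submodule.coe_mem _))
          rw [smul_proj, hzero]
          simp
      rw [he] at hmap
      have := (hasSum_ite_eq i (ω i • ((f i : H)))).unique hmap
      simpa [ContinuousLinearMap.comp_apply] using this.symm
    ext f i
    simp only [ContinuousLinearMap.comp_apply, ContinuousLinearMap.one_apply]
    show ((φ ((adjoint T) (T f))) i : H) = ((f i : H))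
    rw [hφ]
    rw [aux_adj T hT]
    rw [hproj f i]
    rw [smul_smul]
    rw [smul_clm]
    rw [smul_proj]
    rw [aux_biorth hω hC0 hC S Sinv hS hSinv (Submodule.coe_mem (f i)) i]
    rw [if_pos rfl]
    rw [smul_smul]
    rw [← sq]
    rw [mul_inv_cancel₀ (pow_ne_zero 2 (ne_of_gt (hω i)))]
    rw [one_smul]
  · intro hG i j hij x hx y hy
    have happ := ContinuousLinearMap.ext_iff.mp hG (lp.single 2 j (⟨y, hy⟩ : W j))
    have hlp : φ ((adjoint T) (T (lp.single 2 j (⟨y, hy⟩ : W j))))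
        = lp.single 2 j (⟨y, hy⟩ : W j) := by
      simpa [ContinuousLinearMap.comp_apply] using happ
    have hcomp : ((φ ((adjoint T) (T (lp.single 2 j (⟨y, hy⟩ : W j))))) i : H)
        = (((lp.single 2 j (⟨y, hy⟩ : W j) : lp (fun i => ↥(W i)) 2) i : H)) := by
      rw [hlp]
    rw [lp.single_apply_ne _ _ _ hij, hφ, aux_adj T hT, aux_T_single T hT,
      Submodule.coe_zero] at hcomp
    have hpz : (Submodule.orthogonalProjection (W i) y : H) = 0 := by
      rw [show (((⟨y, hy⟩ : W j)) : H) = y from rfl] at hcomp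
      rw [smul_proj, smul_smul, smul_clm, smul_proj,
        aux_biorth hω hC0 hC S Sinv hS hSinv
          (Submodule.coe_mem (Submodule.orthogonalProjection (W i) y)) i, if_pos rfl,
        smul_smul] at hcomp
      have hcoef : ((ω i * ω j : ℝ)) * (((ω i) ^ 2)⁻¹ : ℝ) ≠ 0 := by
        have h1 := hω i; have h2 := hω j; positivity
      exact (smul_eq_zero.mp hcomp).resolve_left hcoef
    have hxy : ⟪x, y⟫_ℂ
        = ⟪((⟨x, hx⟩ : W i) : H), ((Submodule.orthogonalProjection (W i) y : W i) : H)⟫_ℂ := by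
      rw [← Submodule.inner_orthogonalProjectionOnto_eq_of_mem_left (K := W i) (⟨x, hx⟩ : W i) y]
      rfl
    rw [hxy, hpz, inner_zero_right]

end AuxStmt12

/-- for a fusion Riesz basis `W`, TFAE: (1) `W` is a fusion orthonormal basis;
(2) the fusion Gram matrix `𝒢_W = φ_WW T_W^* T_W` is the identity; (3) the fusion Gram
matrix of the 1-uniform family `W' = {(Wᵢ,1)}` is the identity. -/
theorem stmt12 (W : ι → Submodule ℂ H) [∀ i, CompleteSpace (W i)]
    (ω : ι → ℝ) (hω : ∀ i, 0 < ω i)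
    (hriesz : IsFusionRieszBasis W ω)
    (TW Tone : lp (fun i => ↥(W i)) 2 →L[ℂ] H)
    (hTW : ∀ f, HasSum (fun i => ω i • ((f i : H))) (TW f))
    (hTone : ∀ f, HasSum (fun i => ((f i : H))) (Tone f))
    (SW SWinv SWp SWpinv : H →L[ℂ] H)
    (hSW : ∀ f, HasSum (fun i => (ω i) ^ 2 • ((Submodule.orthogonalProjection (W i) f : H))) (SW f))
    (hSWinv : SW.comp SWinv = 1 ∧ SWinv.comp SW = 1)
    (hSWp : ∀ f, HasSum (fun i => ((Submodule.orthogonalProjection (W i) f : H))) (SWp f))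
    (hSWpinv : SWp.comp SWpinv = 1 ∧ SWpinv.comp SWp = 1)
    (φ φp : lp (fun i => ↥(W i)) 2 →L[ℂ] lp (fun i => ↥(W i)) 2)
    (hφ : ∀ f i, ((φ f) i : H) = (Submodule.orthogonalProjection (W i) (SWinv ((f i : H))) : H))
    (hφp : ∀ f i, ((φp f) i : H) = (Submodule.orthogonalProjection (W i) (SWpinv ((f i : H))) : H)) :
    (((∀ i j, i ≠ j → ∀ x ∈ W i, ∀ y ∈ W j, ⟪x, y⟫_ℂ = 0) ∧
        (⨆ i, W i).topologicalClosure = ⊤) ↔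
      φ ∘L (adjoint TW) ∘L TW = 1) ∧
    (((∀ i j, i ≠ j → ∀ x ∈ W i, ∀ y ∈ W j, ⟪x, y⟫_ℂ = 0) ∧
        (⨆ i, W i).topologicalClosure = ⊤) ↔
      φp ∘L (adjoint Tone) ∘L Tone = 1) := by
  classical
  obtain ⟨C, D, hcl, hC0, hCD, hcond⟩ := hriesz
  have hC : ∀ (J : Finset ι) (g : ∀ i, W i),
      C * ∑ j ∈ J, ‖(g j : H)‖ ^ 2 ≤ ‖∑ j ∈ J, ω j • ((g j : H))‖ ^ 2 :=
    fun J g => (hcond J g).1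
  have hD0 : 0 < D := lt_of_lt_of_le hC0 hCD
  have hup : ∀ (j : ι) (v : W j), (ω j) ^ 2 * ‖(v : H)‖ ^ 2 ≤ D * ‖(v : H)‖ ^ 2 := by
    intro j v
    have h1 := (hcond {j} (fun k => if h : k = j then h ▸ v else 0)).2
    simpa [norm_smul, abs_of_pos (hω j), mul_pow] using h1
  have hC' : ∀ (J : Finset ι) (g : ∀ i, W i),
      (C / D) * ∑ j ∈ J, ‖(g j : H)‖ ^ 2 ≤ ‖∑ j ∈ J, (1 : ℝ) • ((g j : H))‖ ^ 2 := by
    intro J g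
    have hlow := hC J (fun j => (ω j)⁻¹ • g j)
    have hsum_eq : (∑ j ∈ J, ω j • (((fun j => (ω j)⁻¹ • g j) j : W j) : H))
        = ∑ j ∈ J, (1 : ℝ) • ((g j : H)) := by
      refine Finset.sum_congr rfl (fun j _ => ?_)
      show ω j • ((ω j)⁻¹ • ((g j : H))) = (1 : ℝ) • ((g j : H))
      rw [smul_smul, mul_inv_cancel₀ (ne_of_gt (hω j)), one_smul]
    rw [hsum_eq] at hlow
    refine le_trans ?_ hlow
    rw [Finset.mul_sum, Finset.mul_sum]
    refine Finset.sum_le_sum (fun j _ => ?_)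
    show C / D * ‖(g j : H)‖ ^ 2 ≤ C * ‖(ω j)⁻¹ • ((g j : H))‖ ^ 2
    have hns : ‖(ω j)⁻¹ • ((g j : H))‖ ^ 2 = (ω j ^ 2)⁻¹ * ‖(g j : H)‖ ^ 2 := by
      rw [norm_smul, Real.norm_eq_abs, abs_of_pos (inv_pos.mpr (hω j)), mul_pow, inv_pow]
    rw [hns]
    by_cases hgz : ‖(g j : H)‖ ^ 2 = 0
    · rw [hgz]; simp
    · have hn : 0 < ‖(g j : H)‖ ^ 2 := lt_of_le_of_ne (by positivity) (Ne.symm hgz)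
      have ha2 : ω j ^ 2 ≤ D := by nlinarith [hup j (g j)]
      have hw2 : 0 < ω j ^ 2 := pow_pos (hω j) 2
      have hinv : D⁻¹ ≤ (ω j ^ 2)⁻¹ := inv_anti₀ hw2 ha2
      calc C / D * ‖(g j : H)‖ ^ 2 = C * D⁻¹ * ‖(g j : H)‖ ^ 2 := by
            rw [div_eq_mul_inv]
        _ ≤ C * (ω j ^ 2)⁻¹ * ‖(g j : H)‖ ^ 2 :=
            mul_le_mul_of_nonneg_right (mul_le_mul_of_nonneg_left hinv hC0.le) hn.le
        _ = C * ((ω j ^ 2)⁻¹ * ‖(g j : H)‖ ^ 2) := by rw [mul_assoc]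
  have hTone' : ∀ f : lp (fun i => ↥(W i)) 2,
      HasSum (fun i => (1 : ℝ) • ((f i : H))) (Tone f) := by
    intro f; simpa using hTone f
  have hSWp' : ∀ f : H,
      HasSum (fun i => ((1 : ℝ)) ^ 2 • ((Submodule.orthogonalProjection (W i) f : H))) (SWp f) := by
    intro f; simpa using hSWp f
  have iff1 := aux_main hω hC0 hC TW hTW SW SWinv hSW hSWinv.1 φ hφ
  have iff2 := aux_main (ω := fun _ => (1 : ℝ)) (fun _ => one_pos) (div_pos hC0 hD0) hC'
    Tone hTone' SWp SWpinv hSWp' hSWpinv.1 φp hφp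
  constructor
  · exact ⟨fun h => iff1.mp h.1, fun h => ⟨iff1.mpr h, hcl⟩⟩
  · exact ⟨fun h => iff2.mp h.1, fun h => ⟨iff2.mpr h, hcl⟩⟩
end
end

section
/- If $W=\{(W_i,\omega_i)\}_{i\in I}$ is a fusion Riesz basis, then the operator $\phi_{WW}$ on $(\sum_{i\in I}\oplus W_i)_{\ell^2}$ defined by $\phi_{WW}(\{f_i\}) = \{\pi_{W_i}S_W^{-1}f_i\}$ acts diagonally as $\phi_{WW}(\{f_i\}) = \{\omega_i^{-2}f_i\}$; in particular $\phi_{WW}$ is invertible with inverse $\{f_i\}\mapsto\{\omega_i^2 f_i\}$. -/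
open scoped InnerProductSpace
open ContinuousLinearMap (adjoint)
set_option maxHeartbeats 1000000
set_option synthInstance.maxHeartbeats 400000
noncomputable section

variable {H : Type*} [NormedAddCommGroup H] [InnerProductSpace ℂ H] [CompleteSpace H]
variable {ι : Type*} [Countable ι]

/-- Key diagonal lemma: for `g ∈ W j`, `π_{W j}(S⁻¹ g) = ω_j⁻² g`. -/
lemma aux_diag (W : ι → Submodule ℂ H) [∀ i, CompleteSpace (W i)]
    (ω : ι → ℝ) (hω : ∀ i, 0 < ω i) {C D : ℝ} (hC : 0 < C)
    (hineq : ∀ (J : Finset ι) (g : ∀ i, W i),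
      C * ∑ j ∈ J, ‖(g j : H)‖ ^ 2 ≤ ‖∑ j ∈ J, ω j • ((g j : H))‖ ^ 2 ∧
      ‖∑ j ∈ J, ω j • ((g j : H))‖ ^ 2 ≤ D * ∑ j ∈ J, ‖(g j : H)‖ ^ 2)
    (SW SWinv : H →L[ℂ] H)
    (hSW : ∀ f, HasSum (fun i => (ω i) ^ 2 • ((Submodule.orthogonalProjection (W i) f : H))) (SW f))
    (hinv : SW.comp SWinv = 1)
    (j : ι) (g : W j) :
    (Submodule.orthogonalProjection (W j) (SWinv (g : H)) : H) = ((ω j) ^ 2)⁻¹ • (g : H) := by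
  classical
  set h := SWinv (g : H) with hh
  have hg : SW h = (g : H) := by
    have := ContinuousLinearMap.ext_iff.mp hinv (g : H)
    simpa using this
  have hsum : HasSum (fun i => (ω i) ^ 2 • (Submodule.orthogonalProjection (W i) h : H)) (g : H) := by
    rw [← hg]; exact hSW h
  have c1 : ∀ (i : ι) (x : H), ((ω i : ℂ)) ^ 2 • x = (ω i) ^ 2 • x := by
    intro i x; rw [← Complex.ofReal_pow, Complex.coe_smul]
  set u : ∀ i, W i := fun i =>
    (ω i : ℂ) • (Submodule.orthogonalProjection (W i) h)
      - (Pi.single j (((ω j : ℂ))⁻¹ • g) : ∀ k, W k) i with hu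
  have hωjne : (ω j : ℂ) ≠ 0 := Complex.ofReal_ne_zero.mpr (hω j).ne'
  have hu_coe : ∀ i, (ω i : ℂ) • (u i : H)
      = (ω i) ^ 2 • (Submodule.orthogonalProjection (W i) h : H) - (if i = j then (g : H) else 0) := by
    intro i
    have hcoe : (u i : H) = (ω i : ℂ) • (Submodule.orthogonalProjection (W i) h : H)
        - (((Pi.single j (((ω j : ℂ))⁻¹ • g) : ∀ k, W k) i : W i) : H) := by
      simp [hu]
    rw [hcoe, smul_sub, smul_smul, ← sq, c1]
    congr 1
    by_cases hij : i = j
    · subst hij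
      rw [Pi.single_eq_same, if_pos rfl]
      have hrfl : ((((ω i : ℂ))⁻¹ • g : W i) : H) = ((ω i : ℂ))⁻¹ • (g : H) := rfl
      rw [hrfl, smul_smul, mul_inv_cancel₀ hωjne, one_smul]
    · rw [Pi.single_eq_of_ne hij, if_neg hij]
      simp
  have hsum2 : HasSum (fun i => ω i • (u i : H)) 0 := by
    have h2 : HasSum (fun i => if i = j then (g : H) else 0) (g : H) := hasSum_ite_eq j _
    have h3 := hsum.sub h2
    rw [sub_self] at h3
    have heq : (fun i => ω i • (u i : H))
        = fun i => (ω i) ^ 2 • (Submodule.orthogonalProjection (W i) h : H)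
            - (if i = j then (g : H) else 0) := by
      funext i
      rw [← Complex.coe_smul, hu_coe i]
    rw [heq]
    exact h3
  have hzero : ∀ i, u i = 0 := by
    intro i0
    have key : ∀ ε > 0, C * ‖(u i0 : H)‖ ^ 2 < ε := by
      intro ε hε
      have hε' : 0 < Real.sqrt ε := Real.sqrt_pos.mpr hε
      have htd := Metric.tendsto_nhds.mp hsum2 (Real.sqrt ε) hε'
      rw [SummationFilter.unconditional_filter, Filter.eventually_atTop] at htd
      obtain ⟨J0, hJ0⟩ := htd
      set J := insert i0 J0 with hJdef
      have hJ : ‖∑ i ∈ J, ω i • (u i : H)‖ < Real.sqrt ε := by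
        have := hJ0 J (Finset.le_iff_subset.mpr (Finset.subset_insert i0 J0))
        rwa [dist_zero_right] at this
      have h1 : C * ‖(u i0 : H)‖ ^ 2 ≤ C * ∑ i ∈ J, ‖(u i : H)‖ ^ 2 := by
        refine mul_le_mul_of_nonneg_left ?_ hC.le
        exact Finset.single_le_sum (f := fun i => ‖(u i : H)‖ ^ 2)
          (fun i _ => sq_nonneg _) (Finset.mem_insert_self i0 J0)
      have h2 := (hineq J u).1
      have h3 : ‖∑ i ∈ J, ω i • ((u i : H))‖ ^ 2 < ε := by
        have := pow_lt_pow_left₀ hJ (norm_nonneg _) (by norm_num : 2 ≠ 0)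
        rwa [Real.sq_sqrt hε.le] at this
      linarith
    have hle : C * ‖(u i0 : H)‖ ^ 2 ≤ 0 := by
      by_contra hpos
      push_neg at hpos
      exact lt_irrefl _ (key _ hpos)
    have hsq : ‖(u i0 : H)‖ ^ 2 ≤ 0 := by
      nlinarith
    have hnorm : ‖(u i0 : H)‖ = 0 := by
      have := le_antisymm hsq (sq_nonneg _)
      exact pow_eq_zero_iff (by norm_num : (2 : ℕ) ≠ 0) |>.mp this |> norm_eq_zero.mp |>
        fun hx => by rw [hx]; exact norm_zero
    exact Subtype.ext (norm_eq_zero.mp hnorm)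
  have hj := hzero j
  have hj' : (ω j : ℂ) • (Submodule.orthogonalProjection (W j) h) = ((ω j : ℂ))⁻¹ • g := by
    have h5 : (ω j : ℂ) • (Submodule.orthogonalProjection (W j) h)
        - (Pi.single j (((ω j : ℂ))⁻¹ • g) : ∀ k, W k) j = 0 := hj
    rw [Pi.single_eq_same, sub_eq_zero] at h5
    exact h5
  have hproj : Submodule.orthogonalProjection (W j) h = (((ω j : ℂ)) ^ 2)⁻¹ • g := by
    have h4 := congrArg (fun x => ((ω j : ℂ))⁻¹ • x) hj'
    simp only [smul_smul, inv_mul_cancel₀ hωjne, one_smul] at h4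
    rw [h4]
    congr 1
    rw [sq, mul_inv]
  have hfin : (Submodule.orthogonalProjection (W j) h : H) = (((ω j : ℂ)) ^ 2)⁻¹ • (g : H) := by
    rw [hproj]; rfl
  rw [hfin, show ((((ω j : ℂ)) ^ 2)⁻¹ : ℂ) = ((((ω j) ^ 2)⁻¹ : ℝ) : ℂ) by push_cast; ring,
    Complex.coe_smul]

/-- Upper bound: `ω_i² ‖x‖ ≤ D ‖x‖` for `x ∈ W i`. -/
lemma aux_bound (W : ι → Submodule ℂ H)
    (ω : ι → ℝ) (hω : ∀ i, 0 < ω i) {C D : ℝ}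
    (hineq : ∀ (J : Finset ι) (g : ∀ i, W i),
      C * ∑ j ∈ J, ‖(g j : H)‖ ^ 2 ≤ ‖∑ j ∈ J, ω j • ((g j : H))‖ ^ 2 ∧
      ‖∑ j ∈ J, ω j • ((g j : H))‖ ^ 2 ≤ D * ∑ j ∈ J, ‖(g j : H)‖ ^ 2)
    (i : ι) (x : W i) :
    (ω i) ^ 2 * ‖(x : H)‖ ≤ D * ‖(x : H)‖ := by
  classical
  rcases eq_or_ne x 0 with rfl | hx
  · simp
  · have h2 := (hineq {i} (Pi.single i x)).2
    simp only [Finset.sum_singleton, Pi.single_eq_same] at h2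
    rw [norm_smul, Real.norm_eq_abs, abs_of_pos (hω i), mul_pow] at h2
    have hxpos : 0 < ‖(x : H)‖ := by
      rw [norm_pos_iff]
      exact fun hc => hx (Subtype.ext hc)
    nlinarith
/-- for a fusion Riesz basis `W`, the operator `φ_WW` acts diagonally as
`{fᵢ} ↦ {ωᵢ⁻² fᵢ}`, and is invertible with inverse `{fᵢ} ↦ {ωᵢ² fᵢ}`. -/
theorem stmt13 (W : ι → Submodule ℂ H) [∀ i, CompleteSpace (W i)]
    (ω : ι → ℝ) (hω : ∀ i, 0 < ω i)
    (hriesz : IsFusionRieszBasis W ω)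
    (SW SWinv : H →L[ℂ] H)
    (hSW : ∀ f, HasSum (fun i => (ω i) ^ 2 • ((Submodule.orthogonalProjection (W i) f : H))) (SW f))
    (hSWinv : SW.comp SWinv = 1 ∧ SWinv.comp SW = 1)
    (φ : lp (fun i => ↥(W i)) 2 →L[ℂ] lp (fun i => ↥(W i)) 2)
    (hφ : ∀ f i, ((φ f) i : H) = (Submodule.orthogonalProjection (W i) (SWinv ((f i : H))) : H)) :
    (∀ f i, ((φ f) i : H) = ((ω i) ^ 2)⁻¹ • ((f i : H))) ∧
    ∃ ψ : lp (fun i => ↥(W i)) 2 →L[ℂ] lp (fun i => ↥(W i)) 2,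
      φ ∘L ψ = 1 ∧ ψ ∘L φ = 1 ∧ ∀ f i, ((ψ f) i : H) = (ω i) ^ 2 • ((f i : H)) := by
  classical
  obtain ⟨C, D, hspan, hC, hCD, hineq⟩ := hriesz
  have hD : 0 < D := lt_of_lt_of_le hC hCD
  have part1 : ∀ f i, ((φ f) i : H) = ((ω i) ^ 2)⁻¹ • ((f i : H)) := by
    intro f i
    rw [hφ f i, aux_diag W ω hω hC hineq SW SWinv hSW hSWinv.1 i (f i)]
  refine ⟨part1, ?_⟩
  -- pointwise bound ω_i² ‖x‖ ≤ D ‖x‖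
  have hb := aux_bound W ω hω hineq
  have hnorm_smul : ∀ (i : ι) (x : W i), ‖((ω i : ℂ)) ^ 2 • x‖ = (ω i) ^ 2 * ‖x‖ := by
    intro i x
    rw [norm_smul, norm_pow, Complex.norm_real, Real.norm_eq_abs, abs_of_pos (hω i)]
  have htr : (2 : ENNReal).toReal = 2 := by norm_num
  have hrp : ∀ x : ℝ, x ^ ((2 : ENNReal).toReal) = x ^ 2 := by
    intro x; rw [htr]; norm_num [Real.rpow_natCast]
  have hmem : ∀ f : lp (fun i => ↥(W i)) 2,
      Memℓp (fun i => ((ω i : ℂ)) ^ 2 • f i) 2 := by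
    intro f
    apply memℓp_gen
    have hsum := (lp.memℓp f).summable (p := 2) (by norm_num)
    refine Summable.of_nonneg_of_le (fun i => ?_) (fun i => ?_) (hsum.mul_left (D ^ 2))
    · rw [hrp]; positivity
    · rw [hrp, hrp, hnorm_smul]
      have h4 := pow_le_pow_left₀ (by positivity) (hb i (f i)) 2
      exact le_trans h4 (le_of_eq (mul_pow D _ 2))
  -- the linear map
  set Lψ : lp (fun i => ↥(W i)) 2 →ₗ[ℂ] lp (fun i => ↥(W i)) 2 :=
    { toFun := fun f => ⟨fun i => ((ω i : ℂ)) ^ 2 • f i, hmem f⟩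
      map_add' := by
        intro f g
        apply lp.ext
        funext i
        have h1 : (↑((⟨fun i => ((ω i : ℂ)) ^ 2 • f i, hmem f⟩ : lp (fun i => ↥(W i)) 2)
            + ⟨fun i => ((ω i : ℂ)) ^ 2 • g i, hmem g⟩) : ∀ i, W i) i
            = ((ω i : ℂ)) ^ 2 • f i + ((ω i : ℂ)) ^ 2 • g i := by
          rw [lp.coeFn_add]; rfl
        have h2 : (↑(f + g) : ∀ i, W i) i = f i + g i := by rw [lp.coeFn_add]; rfl
        rw [h1]
        show ((ω i : ℂ)) ^ 2 • (f + g) i = _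
        rw [h2, smul_add]
      map_smul' := by
        intro c f
        apply lp.ext
        funext i
        have h1 : (↑(c • (⟨fun i => ((ω i : ℂ)) ^ 2 • f i, hmem f⟩
            : lp (fun i => ↥(W i)) 2)) : ∀ i, W i) i
            = c • (((ω i : ℂ)) ^ 2 • f i) := by
          rw [lp.coeFn_smul]; rfl
        have h2 : (↑(c • f) : ∀ i, W i) i = c • f i := by rw [lp.coeFn_smul]; rfl
        show (↑(⟨fun i => ((ω i : ℂ)) ^ 2 • (c • f) i, hmem (c • f)⟩
            : lp (fun i => ↥(W i)) 2) : ∀ k, ↥(W k)) i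
          = (↑(c • (⟨fun i => ((ω i : ℂ)) ^ 2 • f i, hmem f⟩
            : lp (fun i => ↥(W i)) 2)) : ∀ k, ↥(W k)) i
        rw [h1]
        show ((ω i : ℂ)) ^ 2 • (c • f) i = _
        rw [h2, smul_comm] } with hLψ
  have hLψ_apply : ∀ (f : lp (fun i => ↥(W i)) 2) (i : ι),
      (Lψ f) i = ((ω i : ℂ)) ^ 2 • f i := fun f i => rfl
  have hbound : ∀ f : lp (fun i => ↥(W i)) 2, ‖Lψ f‖ ≤ D * ‖f‖ := by
    intro f
    refine lp.norm_le_of_forall_sum_le (by norm_num) (mul_nonneg hD.le (norm_nonneg f)) ?_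
    intro s
    have h1 : ∀ i, ‖(Lψ f) i‖ ^ ((2 : ENNReal).toReal) ≤ D ^ 2 * ‖f i‖ ^ ((2 : ENNReal).toReal) := by
      intro i
      rw [hrp, hrp, hLψ_apply, hnorm_smul]
      have h4 := pow_le_pow_left₀ (by positivity) (hb i (f i)) 2
      exact le_trans h4 (le_of_eq (mul_pow D _ 2))
    calc ∑ i ∈ s, ‖(Lψ f) i‖ ^ ((2 : ENNReal).toReal)
        ≤ ∑ i ∈ s, D ^ 2 * ‖f i‖ ^ ((2 : ENNReal).toReal) :=
          Finset.sum_le_sum fun i _ => h1 i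
      _ = D ^ 2 * ∑ i ∈ s, ‖f i‖ ^ ((2 : ENNReal).toReal) := by rw [Finset.mul_sum]
      _ ≤ D ^ 2 * ‖f‖ ^ ((2 : ENNReal).toReal) := by
          refine mul_le_mul_of_nonneg_left ?_ (by positivity)
          exact lp.sum_rpow_le_norm_rpow (by norm_num) f s
      _ ≤ (D * ‖f‖) ^ ((2 : ENNReal).toReal) := by
          rw [hrp, hrp, mul_pow]
  set ψ : lp (fun i => ↥(W i)) 2 →L[ℂ] lp (fun i => ↥(W i)) 2 :=
    Lψ.mkContinuous D hbound with hψdef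
  have hψ_apply : ∀ (f : lp (fun i => ↥(W i)) 2) (i : ι),
      ((ψ f) i : H) = (ω i) ^ 2 • ((f i : H)) := by
    intro f i
    have : (ψ f) i = ((ω i : ℂ)) ^ 2 • f i := rfl
    rw [this]
    have : ((((ω i : ℂ)) ^ 2 • f i : W i) : H) = ((ω i : ℂ)) ^ 2 • (f i : H) := rfl
    rw [this, ← Complex.ofReal_pow, Complex.coe_smul]
  have hω2ne : ∀ i, (ω i) ^ 2 ≠ 0 := fun i => pow_ne_zero 2 (hω i).ne'
  refine ⟨ψ, ?_, ?_, hψ_apply⟩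
  · apply ContinuousLinearMap.ext
    intro f
    apply lp.ext
    funext i
    apply Subtype.ext
    show ((φ (ψ f)) i : H) = (((1 : lp (fun i => ↥(W i)) 2 →L[ℂ] lp (fun i => ↥(W i)) 2) f) i : H)
    rw [part1, hψ_apply, smul_smul, inv_mul_cancel₀ (hω2ne i), one_smul]
    rfl
  · apply ContinuousLinearMap.ext
    intro f
    apply lp.ext
    funext i
    apply Subtype.ext
    show ((ψ (φ f)) i : H) = (((1 : lp (fun i => ↥(W i)) 2 →L[ℂ] lp (fun i => ↥(W i)) 2) f) i : H)
    rw [hψ_apply, part1, smul_smul, mul_inv_cancel₀ (hω2ne i), one_smul]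
    rfl
end
end

section
/- Let $W=\{(W_i,\omega_i)\}_{i\in I}$ be a fusion frame with lower bound $A_W$. Then the operator $L_W = T_W\phi_{WW}T_W^* = \sum_{i\in I}\omega_i^2\pi_{W_i}S_W^{-1}\pi_{W_i}$ is self-adjoint, positive, and invertible; in fact $\langle L_W f, f\rangle \ge \frac{A_W}{\|S_W^{1/2}\|^2}\|f\|^2$ for all $f\in\mathcal{H}$. -/
open scoped InnerProductSpace
open ContinuousLinearMap (adjoint)
set_option maxHeartbeats 1000000
set_option synthInstance.maxHeartbeats 400000
noncomputable section

variable {H : Type*} [NormedAddCommGroup H] [InnerProductSpace ℂ H] [CompleteSpace H]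
variable {ι : Type*} [Countable ι]

private lemma proj_inner_left' (K : Submodule ℂ H) [CompleteSpace K] (u : H) {w : H}
    (hw : w ∈ K) : ⟪(Submodule.orthogonalProjection K u : H), w⟫_ℂ = ⟪u, w⟫_ℂ := by
  have h := Submodule.starProjection_inner_eq_zero (K := K) u w hw
  rw [inner_sub_left, sub_eq_zero] at h
  exact h.symm

/-- the alternate fusion frame operator `L_W = T_W φ_WW T_W^*` of a fusion
frame is self-adjoint, positive and invertible, with
`⟪L_W f, f⟫ ≥ (A_W/‖S_W^{1/2}‖²)‖f‖²` (`R` denotes the positive square root of `S_W`). -/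
theorem stmt15 (W : ι → Submodule ℂ H) [∀ i, CompleteSpace (W i)]
    (ω : ι → ℝ) (hω : ∀ i, 0 < ω i) (A B : ℝ) (hA : 0 < A) (hAB : A ≤ B)
    (hframe : IsFusionFrame W ω A B)
    (TW : lp (fun i => ↥(W i)) 2 →L[ℂ] H)
    (hTW : ∀ f, HasSum (fun i => ω i • ((f i : H))) (TW f))
    (SW SWinv : H →L[ℂ] H)
    (hSW : ∀ f, HasSum (fun i => (ω i) ^ 2 • ((Submodule.orthogonalProjection (W i) f : H))) (SW f))
    (hSWinv : SW.comp SWinv = 1 ∧ SWinv.comp SW = 1)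
    (φ : lp (fun i => ↥(W i)) 2 →L[ℂ] lp (fun i => ↥(W i)) 2)
    (hφ : ∀ f i, ((φ f) i : H) = (Submodule.orthogonalProjection (W i) (SWinv ((f i : H))) : H))
    (R : H →L[ℂ] H) (hRsa : IsSelfAdjoint R) (hRpos : ∀ f, 0 ≤ (⟪R f, f⟫_ℂ).re)
    (hRsq : R.comp R = SW) :
    IsSelfAdjoint (TW ∘L φ ∘L (adjoint TW)) ∧
    (∀ f : H, 0 ≤ (⟪(TW ∘L φ ∘L (adjoint TW)) f, f⟫_ℂ).re) ∧
    (∀ f : H, A / ‖R‖ ^ 2 * ‖f‖ ^ 2 ≤ (⟪(TW ∘L φ ∘L (adjoint TW)) f, f⟫_ℂ).re) ∧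
    ∃ Linv : H →L[ℂ] H,
      (TW ∘L φ ∘L (adjoint TW)) ∘L Linv = 1 ∧ Linv ∘L (TW ∘L φ ∘L (adjoint TW)) = 1 := by
  classical
  set L := TW ∘L φ ∘L (adjoint TW) with hLdef
  have hcs : ∀ (r : ℝ) (x : H), r • x = ((r : ℂ)) • x := fun r x => by
    rw [← algebraMap_smul ℂ r x, Complex.coe_algebraMap]
  -- basic facts about SW, SWinv
  have hS1 : ∀ x : H, SW (SWinv x) = x := fun x => by
    simpa using ContinuousLinearMap.ext_iff.mp hSWinv.1 x
  have hS2 : ∀ x : H, SWinv (SW x) = x := fun x => by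
    simpa using ContinuousLinearMap.ext_iff.mp hSWinv.2 x
  have hRR : ∀ x : H, SW x = R (R x) := fun x => by rw [← hRsq]; rfl
  have hSsa : IsSelfAdjoint SW := by
    rw [← hRsq]
    rw [ContinuousLinearMap.isSelfAdjoint_iff'] at hRsa ⊢
    rw [ContinuousLinearMap.adjoint_comp, hRsa]
  have hSsym : ∀ x y : H, ⟪SW x, y⟫_ℂ = ⟪x, SW y⟫_ℂ := fun x y => hSsa.isSymmetric x y
  have hSinvsym : ∀ x y : H, ⟪SWinv x, y⟫_ℂ = ⟪x, SWinv y⟫_ℂ := fun x y => by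
    calc ⟪SWinv x, y⟫_ℂ = ⟪SWinv x, SW (SWinv y)⟫_ℂ := by rw [hS1]
      _ = ⟪SW (SWinv x), SWinv y⟫_ℂ := (hSsym _ _).symm
      _ = ⟪x, SWinv y⟫_ℂ := by rw [hS1]
  -- the adjoint of the synthesis operator is the analysis operator
  have hadj : ∀ (f : H) (i : ι),
      (((adjoint TW) f) i : H) = ω i • ((Submodule.orthogonalProjection (W i) f : H)) := by
    intro f i
    have heq : ((adjoint TW) f) i = ω i • Submodule.orthogonalProjection (W i) f := by
      apply ext_inner_right ℂ
      intro v
      set e : lp (fun i => ↥(W i)) 2 := lp.single 2 i v with he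
      have hsingle : TW e = ω i • (v : H) := by
        refine (hTW e).unique ?_
        have hz : ∀ j, j ≠ i → ω j • ((e j : H)) = 0 := by
          intro j hj
          rw [he, lp.single_apply_ne (E := fun i => ↥(W i)) 2 i v hj]
          simp
        have h := hasSum_single (f := fun j => ω j • ((e j : H))) i hz
        simpa only [he, lp.single_apply_self] using h
      calc ⟪((adjoint TW) f) i, v⟫_ℂ
          = ⟪(adjoint TW) f, e⟫_ℂ := by
            rw [he]
            exact (lp.inner_single_right (𝕜 := ℂ) i v ((adjoint TW) f)).symm
        _ = ⟪f, TW e⟫_ℂ := ContinuousLinearMap.adjoint_inner_left TW _ _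
        _ = ⟪f, ω i • (v : H)⟫_ℂ := by rw [hsingle]
        _ = (ω i : ℂ) * ⟪f, (v : H)⟫_ℂ := by rw [hcs, inner_smul_right]
        _ = (ω i : ℂ) * ⟪(Submodule.orthogonalProjection (W i) f : H), (v : H)⟫_ℂ := by
            rw [proj_inner_left' (W i) f v.2]
        _ = ⟪ω i • Submodule.orthogonalProjection (W i) f, v⟫_ℂ := by
            rw [Submodule.coe_inner, Submodule.coe_smul_of_tower, hcs, inner_smul_left,
              Complex.conj_ofReal]
    rw [heq, Submodule.coe_smul_of_tower]
  -- key computation: the quadratic form of L as a sum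
  have key : ∀ f : H,
      HasSum (fun i => (ω i) ^ 2 * ‖R (SWinv ((Submodule.orthogonalProjection (W i) f : H)))‖ ^ 2)
        ((⟪L f, f⟫_ℂ).re) := by
    intro f
    set g := (adjoint TW) f with hg
    have hLf : ⟪L f, f⟫_ℂ = ⟪φ g, g⟫_ℂ := by
      have h1 : L f = TW (φ g) := rfl
      rw [h1, ← ContinuousLinearMap.adjoint_inner_right]
    have hterm : ∀ i, ⟪(φ g) i, g i⟫_ℂ =
        ((((ω i) ^ 2 * ‖R (SWinv ((Submodule.orthogonalProjection (W i) f : H)))‖ ^ 2 : ℝ)) : ℂ) := by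
      intro i
      set p : H := ((Submodule.orthogonalProjection (W i) f : H)) with hp
      set u : H := SWinv p with hu
      have hgi : ((g i : H)) = ω i • p := hadj f i
      have hmem : ((g i : H)) ∈ W i := (g i).2
      have hpu : R (R u) = p := by rw [← hRR u, hu, hS1]
      calc ⟪(φ g) i, g i⟫_ℂ
          = ⟪(((φ g) i : H)), ((g i : H))⟫_ℂ := Submodule.coe_inner _ _ _
        _ = ⟪((Submodule.orthogonalProjection (W i) (SWinv ((g i : H)))) : H), ((g i : H))⟫_ℂ := by
            rw [hφ]
        _ = ⟪SWinv ((g i : H)), ((g i : H))⟫_ℂ := proj_inner_left' (W i) _ hmem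
        _ = ((ω i : ℂ)) ^ 2 * ⟪u, p⟫_ℂ := by
            rw [hgi, hcs, map_smul, inner_smul_left, inner_smul_right, Complex.conj_ofReal,
              ← hu]
            ring
        _ = ((ω i : ℂ)) ^ 2 * ⟪R u, R u⟫_ℂ := by
            rw [← hpu]
            congr 1
            exact (hRsa.isSymmetric u (R u)).symm
        _ = ((ω i : ℂ)) ^ 2 * ((‖R u‖ : ℂ)) ^ 2 := by
            rw [inner_self_eq_norm_sq_to_K]
            exact rfl
        _ = ((((ω i) ^ 2 * ‖R u‖ ^ 2 : ℝ)) : ℂ) := by push_cast; rfl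
    have hC := lp.hasSum_inner (𝕜 := ℂ) (φ g) g
    rw [funext hterm] at hC
    rw [hLf]
    have hRe := hC.mapL Complex.reCLM
    simpa only [Complex.reCLM_apply, Complex.ofReal_re] using hRe
  -- positivity
  have pos : ∀ f : H, 0 ≤ (⟪L f, f⟫_ℂ).re := fun f =>
    hasSum_le (fun i => by positivity) hasSum_zero (key f)
  -- the lower bound
  have lower : ∀ f : H, A / ‖R‖ ^ 2 * ‖f‖ ^ 2 ≤ (⟪L f, f⟫_ℂ).re := by
    intro f
    by_cases hR0 : ‖R‖ = 0
    · have hR' : R = 0 := norm_eq_zero.mp hR0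
      have hf0 : f = 0 := by
        calc f = SW (SWinv f) := (hS1 f).symm
          _ = R (R (SWinv f)) := hRR _
          _ = 0 := by rw [hR']; simp
      rw [hf0]
      simpa using pos 0
    · have hRpos' : 0 < ‖R‖ := lt_of_le_of_ne (norm_nonneg R) (Ne.symm hR0)
      obtain ⟨s, hs, hAs, _⟩ := hframe f
      have hcomp : ∀ i, (ω i) ^ 2 * ‖(Submodule.orthogonalProjection (W i) f : H)‖ ^ 2 ≤
          ‖R‖ ^ 2 * ((ω i) ^ 2 * ‖R (SWinv ((Submodule.orthogonalProjection (W i) f : H)))‖ ^ 2) := by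
        intro i
        set p : H := ((Submodule.orthogonalProjection (W i) f : H)) with hp
        set u : H := SWinv p with hu
        have hpu : R (R u) = p := by rw [← hRR u, hu, hS1]
        have hnorm : ‖p‖ ≤ ‖R‖ * ‖R u‖ := by
          rw [← hpu]
          exact R.le_opNorm (R u)
        have h2 : ‖p‖ ^ 2 ≤ (‖R‖ * ‖R u‖) ^ 2 := by
          have := norm_nonneg p
          nlinarith [norm_nonneg (R u), norm_nonneg R]
        nlinarith [sq_nonneg (ω i)]
      have hle : s ≤ ‖R‖ ^ 2 * (⟪L f, f⟫_ℂ).re :=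
        hasSum_le hcomp hs ((key f).mul_left (‖R‖ ^ 2))
      rw [div_mul_eq_mul_div, div_le_iff₀ (by positivity)]
      calc A * ‖f‖ ^ 2 ≤ s := hAs
        _ ≤ ‖R‖ ^ 2 * (⟪L f, f⟫_ℂ).re := hle
        _ = (⟪L f, f⟫_ℂ).re * ‖R‖ ^ 2 := mul_comm _ _
  -- φ is self-adjoint, hence L is self-adjoint
  have hφsa : IsSelfAdjoint φ := by
    rw [ContinuousLinearMap.isSelfAdjoint_iff_isSymmetric]
    intro x y
    have hterm : (fun i => ⟪(φ x) i, y i⟫_ℂ) = fun i => ⟪x i, (φ y) i⟫_ℂ := by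
      funext i
      calc ⟪(φ x) i, y i⟫_ℂ
          = ⟪(((φ x) i : H)), ((y i : H))⟫_ℂ := Submodule.coe_inner _ _ _
        _ = ⟪((Submodule.orthogonalProjection (W i) (SWinv ((x i : H)))) : H), ((y i : H))⟫_ℂ := by
            rw [hφ]
        _ = ⟪SWinv ((x i : H)), ((y i : H))⟫_ℂ := proj_inner_left' (W i) _ (y i).2
        _ = ⟪((x i : H)), SWinv ((y i : H))⟫_ℂ := hSinvsym _ _
        _ = ⟪((x i : H)), ((Submodule.orthogonalProjection (W i) (SWinv ((y i : H)))) : H)⟫_ℂ := by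
            have h := proj_inner_left' (W i) (SWinv ((y i : H))) (x i).2
            calc ⟪((x i : H)), SWinv ((y i : H))⟫_ℂ
                = (starRingEnd ℂ) ⟪SWinv ((y i : H)), ((x i : H))⟫_ℂ :=
                  (inner_conj_symm _ _).symm
              _ = (starRingEnd ℂ)
                    ⟪((Submodule.orthogonalProjection (W i) (SWinv ((y i : H)))) : H), ((x i : H))⟫_ℂ := by
                  rw [h]
              _ = _ := inner_conj_symm _ _
        _ = ⟪(((x i) : H)), (((φ y) i : H))⟫_ℂ := by rw [hφ]
        _ = ⟪x i, (φ y) i⟫_ℂ := (Submodule.coe_inner _ _ _).symm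
    have h1 := lp.hasSum_inner (𝕜 := ℂ) (φ x) y
    have h2 := lp.hasSum_inner (𝕜 := ℂ) x (φ y)
    rw [hterm] at h1
    exact h1.unique h2
  have hsa : IsSelfAdjoint L := hφsa.conj_adjoint TW
  refine ⟨hsa, pos, lower, ?_⟩
  -- invertibility
  by_cases hR0 : ‖R‖ = 0
  · have hR' : R = 0 := norm_eq_zero.mp hR0
    have hall : ∀ x : H, x = 0 := fun x => by
      calc x = SW (SWinv x) := (hS1 x).symm
        _ = R (R (SWinv x)) := hRR _
        _ = 0 := by rw [hR']; simp
    refine ⟨1, ?_, ?_⟩ <;>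
    · ext x
      simp only [ContinuousLinearMap.comp_apply, ContinuousLinearMap.one_apply, hall x,
        map_zero]
  · have hRpos' : 0 < ‖R‖ := lt_of_le_of_ne (norm_nonneg R) (Ne.symm hR0)
    have hc : 0 < A / ‖R‖ ^ 2 := div_pos hA (by positivity)
    set c := A / ‖R‖ ^ 2 with hcdef
    have hnormle : ∀ x : H, c * ‖x‖ ≤ ‖L x‖ := by
      intro x
      rcases eq_or_ne x 0 with h | h
      · simp [h]
      · have h1 : c * ‖x‖ ^ 2 ≤ (⟪L x, x⟫_ℂ).re := lower x
        have h2 : (⟪L x, x⟫_ℂ).re ≤ ‖⟪L x, x⟫_ℂ‖ := Complex.re_le_norm _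
        have h3 : ‖⟪L x, x⟫_ℂ‖ ≤ ‖L x‖ * ‖x‖ := norm_inner_le_norm _ _
        have hx : 0 < ‖x‖ := norm_pos_iff.mpr h
        have h4 : c * ‖x‖ * ‖x‖ ≤ ‖L x‖ * ‖x‖ := by nlinarith
        exact le_of_mul_le_mul_right h4 hx
    have hanti : AntilipschitzWith (⟨c⁻¹, by positivity⟩ : NNReal) L := by
      refine ContinuousLinearMap.antilipschitz_of_bound L fun x => ?_
      have h := hnormle x
      change ‖x‖ ≤ c⁻¹ * ‖L x‖
      rw [← mul_le_mul_iff_right₀ hc, ← mul_assoc, mul_inv_cancel₀ hc.ne', one_mul]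
      exact h
    have hclosed : IsClosed (Set.range L) := hanti.isClosed_range L.uniformContinuous
    have hker : LinearMap.ker (L : H →ₗ[ℂ] H) = ⊥ := by
      rw [Submodule.eq_bot_iff]
      intro x hx
      have hx0 : L x = 0 := hx
      have h1 : c * ‖x‖ ≤ 0 := by simpa [hx0] using hnormle x
      have h2 : ‖x‖ ≤ 0 := by nlinarith [norm_nonneg x]
      exact norm_le_zero_iff.mp h2
    have hcomplete : CompleteSpace (LinearMap.range (L : H →ₗ[ℂ] H)) := hanti.completeSpace_range_clm
    have horth : (LinearMap.range (L : H →ₗ[ℂ] H))ᗮ = ⊥ := by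
      rw [Submodule.eq_bot_iff]
      intro x hx
      have h0 : ⟪L x, x⟫_ℂ = 0 := hx (L x) (LinearMap.mem_range_self _ x)
      have h1 : c * ‖x‖ ^ 2 ≤ 0 := by
        have := lower x
        rw [h0] at this
        simpa using this
      have h2 : ‖x‖ ^ 2 ≤ 0 := by nlinarith [sq_nonneg ‖x‖]
      have h3 : ‖x‖ = 0 := by nlinarith [norm_nonneg x, sq_nonneg ‖x‖]
      exact norm_eq_zero.mp h3
    have hrange : LinearMap.range (L : H →ₗ[ℂ] H) = ⊤ := by
      haveI := hcomplete
      exact Submodule.orthogonal_eq_bot_iff.mp horth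
    refine ⟨((ContinuousLinearEquiv.ofBijective L hker hrange).symm : H →L[ℂ] H), ?_, ?_⟩
    · ext x
      simp
    · ext x
      simp
end
end
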